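/- Let h : I → Matrix (Fin 3) (Fin 3) ℝ be a differentiable family of positive definite symmetric matrices and K : I → Matrix (Fin 3) (Fin 3) ℝ with h' = 2·h·K' where K' denotes K with an index lowered, i.e. h'(t)ᵢⱼ = 2·(h(t)·K(t))ᵢⱼ with h·K symmetric. If K(t) is a diagonal matrix diag(λ₁(t), λ₂(t), λ₃(t)) for all t and h(t₀) is diagonal, then h(t) is diagonal for all t, with hᵢᵢ(t) = hᵢᵢ(t₀)·exp(2∫_{t₀}^t λᵢ(s) ds). -/

import Mathlib

open Matrix intervalIntegral

attribute [local instance] Matrix.normedAddCommGroup Matrix.normedSpace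

/-- Scalar linear ODE: if `f' = 2 c f` on `Ioo a b` with `c` continuous, then
`f t = f t₀ * exp (2 ∫_{t₀}^t c)`. -/
lemma scalar_ode_aux (a b t₀ : ℝ) (ht₀ : t₀ ∈ Set.Ioo a b) (f c : ℝ → ℝ)
    (hc : ContinuousOn c (Set.Ioo a b))
    (hf : ∀ t ∈ Set.Ioo a b, HasDerivAt f (2 * c t * f t) t) :
    ∀ t ∈ Set.Ioo a b, f t = f t₀ * Real.exp (2 * ∫ s in t₀..t, c s) := by
  set F : ℝ → ℝ := fun t => ∫ s in t₀..t, c s with hF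
  have hFd : ∀ t ∈ Set.Ioo a b, HasDerivAt F (c t) t := by
    intro t ht
    apply intervalIntegral.integral_hasDerivAt_right
    · apply ContinuousOn.intervalIntegrable
      apply hc.mono
      intro x hx
      have hsub : Set.uIcc t₀ t ⊆ Set.Ioo a b := by
        exact Set.ordConnected_Ioo.uIcc_subset ht₀ ht
      exact hsub hx
    · exact hc.stronglyMeasurableAtFilter isOpen_Ioo t ht
    · exact hc.continuousAt (isOpen_Ioo.mem_nhds ht)
  set g : ℝ → ℝ := fun t => f t * Real.exp (-(2 * F t)) with hg
  have hgd : ∀ t ∈ Set.Ioo a b, HasDerivAt g 0 t := by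
    intro t ht
    have h1 : HasDerivAt (fun t => Real.exp (-(2 * F t)))
        (Real.exp (-(2 * F t)) * (-(2 * c t))) t :=
      (((hFd t ht).const_mul 2).neg).exp
    have := (hf t ht).mul h1
    refine this.congr_deriv ?_
    ring
  have hconst : ∀ t ∈ Set.Ioo a b, g t = g t₀ := by
    intro t ht
    apply (convex_Ioo a b).is_const_of_fderivWithin_eq_zero
      (fun s hs => ((hgd s hs).differentiableAt).differentiableWithinAt)
      (fun s hs => ?_) ht ht₀
    rw [fderivWithin_of_isOpen isOpen_Ioo hs, ((hgd s hs).hasFDerivAt).fderiv]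
    ext x
    simp
  intro t ht
  have h0 : F t₀ = 0 := intervalIntegral.integral_same
  have := hconst t ht
  simp only [hg, h0, mul_zero, neg_zero, Real.exp_zero, mul_one] at this
  have hne : Real.exp (-(2 * F t)) ≠ 0 := Real.exp_ne_zero _
  have : f t = f t₀ * Real.exp (2 * F t) := by
    field_simp [Real.exp_neg] at this ⊢
    rw [← this, mul_assoc, ← Real.exp_add]
    simp
  exact this

/-- ADM evolution of the spatial metric: if `∂ₜ h = 2 h K` with `K(t)` a
diagonal matrix `diag (λ₁ t, λ₂ t, λ₃ t)`, `h K` symmetric, and `h(t₀)` a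
positive definite symmetric diagonal matrix, then `h(t)` stays diagonal and
`hᵢᵢ(t) = hᵢᵢ(t₀) · exp (2 ∫_{t₀}^t λᵢ)`. -/
theorem metric_evolution_diagonal (a b t₀ : ℝ) (ht₀ : t₀ ∈ Set.Ioo a b)
    (h K : ℝ → Matrix (Fin 3) (Fin 3) ℝ) (l : Fin 3 → ℝ → ℝ)
    (hlcont : ∀ i, ContinuousOn (l i) (Set.Ioo a b))
    (hKdiag : ∀ t ∈ Set.Ioo a b, K t = Matrix.diagonal (fun i => l i t))
    (hev : ∀ t ∈ Set.Ioo a b, HasDerivAt h (2 • (h t * K t)) t)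
    (hsymm : ∀ t ∈ Set.Ioo a b, (h t * K t).IsSymm)
    (hpos : (h t₀).PosDef) (hsym0 : (h t₀).IsSymm) (hdiag0 : (h t₀).IsDiag) :
    ∀ t ∈ Set.Ioo a b, (h t).IsDiag ∧
      ∀ i, h t i i = h t₀ i i * Real.exp (2 * ∫ s in t₀..t, l i s) := by
  have entry : ∀ (i j : Fin 3), ∀ t ∈ Set.Ioo a b,
      h t i j = h t₀ i j * Real.exp (2 * ∫ s in t₀..t, l j s) := by
    intro i j
    apply scalar_ode_aux a b t₀ ht₀ (fun t => h t i j) (l j) (hlcont j)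
    intro t ht
    have hd : HasDerivAt (fun t => h t i j) ((2 • (h t * K t)) i j) t := by
      exact hasDerivAt_pi.mp (hasDerivAt_pi.mp (hev t ht) i) j
    convert hd using 1
    rw [hKdiag t ht]
    simp [Matrix.smul_apply, Matrix.mul_diagonal]
    ring
  intro t ht
  refine ⟨fun i j hij => ?_, fun i => entry i i t ht⟩
  show h t i j = 0
  rw [entry i j t ht, hdiag0 hij, zero_mul]
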